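/- With the hypotheses and definitions of the previous statement (u·y = Q²·y·u, K = u^{-1}, F = c_F·y, E = c_E·((λ+λ^{-1})y^{-1} + Q·u·y^{-1} + Q^{-1}·u^{-1}·y^{-1}), c_E·c_F = -(Q-Q^{-1})^{-2}), the Casimir element takes the scalar value: -(Q - Q^{-1})²·E·F - Q^{-1}·K - Q·K^{-1} = (λ + λ^{-1})·1. -/

import Mathlib

/-- In the representation `π^λ` of `𝒰_Q(sl₂)` built from a `Q²`-Weyl pair (`uy = Q²yu`,
`K = u⁻¹`, `F = c_F y`, `E = c_E((λ+λ⁻¹)y⁻¹ + Q·u·y⁻¹ + Q⁻¹·u⁻¹·y⁻¹)`,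
`c_E c_F = -(Q-Q⁻¹)⁻²`), the quadratic Casimir takes the scalar value `λ + λ⁻¹`:
`-(Q-Q⁻¹)²·EF - Q⁻¹·K - Q·K⁻¹ = (λ+λ⁻¹)·1`. -/
theorem weyl_pair_rep_casimir {A : Type*} [Ring A] [Algebra ℂ A]
    (Q : ℂ) (hQ0 : Q ≠ 0) (hQ1 : Q ^ 2 ≠ 1)
    (u y : Aˣ) (huy : (u : A) * (y : A) = Q ^ 2 • ((y : A) * (u : A)))
    (l : ℂ) (hl : l ≠ 0)
    (cE cF : ℂ) (hcE : cE ≠ 0) (hcF : cF ≠ 0)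
    (hc : cE * cF = -((Q - Q⁻¹) ^ 2)⁻¹)
    (K E F : A)
    (hK : K = ((u⁻¹ : Aˣ) : A))
    (hF : F = cF • ((y : A)))
    (hE : E = cE • ((l + l⁻¹) • ((y⁻¹ : Aˣ) : A)
        + Q • ((u : A) * ((y⁻¹ : Aˣ) : A))
        + Q⁻¹ • (((u⁻¹ : Aˣ) : A) * ((y⁻¹ : Aˣ) : A)))) :
    -((Q - Q⁻¹) ^ 2) • (E * F) - Q⁻¹ • K - Q • ((u : A)) = (l + l⁻¹) • (1 : A) := by
  have hQne : Q - Q⁻¹ ≠ 0 := by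
    intro h
    apply hQ1
    field_simp at h
    rw [sq]
    linear_combination h
  have hinv : -((Q - Q⁻¹) ^ 2) * (cE * cF) = 1 := by
    rw [hc, mul_neg, neg_mul, neg_neg, mul_inv_cancel₀ (pow_ne_zero 2 hQne)]
  have hyy : ((y⁻¹ : Aˣ) : A) * (y : A) = 1 := by exact_mod_cast y.inv_mul
  have hEF : E * F = (cE * cF) • ((l + l⁻¹) • (1 : A) + Q • (u : A)
      + Q⁻¹ • ((u⁻¹ : Aˣ) : A)) := by
    subst hF hE
    rw [smul_mul_smul_comm]
    congr 1
    simp only [add_mul, smul_mul_assoc, mul_assoc, hyy, mul_one]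
  rw [hEF, smul_smul, hinv, one_smul, hK]
  abel
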